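/- Let D⁺, D⁻ > 0, λ ∈ (0,1), α(λ) = λ√D⁻/(λ√D⁻+(1-λ)√D⁺). If λ = D⁺/(D⁺+D⁻) (the mass-conservative interface condition) and D⁺ > D⁻, then α(λ) > 1/2; i.e., under continuity of flux, the expected residence time is longer on the side with the larger dispersion coefficient. -/

import Mathlib

/-- Under the mass-conservative interface condition
`λ = D⁺/(D⁺+D⁻)`, if `D⁺ > D⁻` then `α(λ) > 1/2`. -/
theorem stmt_5 (Dp Dm lam : ℝ) (hDp : 0 < Dp) (hDm : 0 < Dm)
    (alpha : ℝ)
    (halpha : alpha = lam * Real.sqrt Dm /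
      (lam * Real.sqrt Dm + (1 - lam) * Real.sqrt Dp))
    (hlam : lam = Dp / (Dp + Dm)) (hD : Dm < Dp) :
    1/2 < alpha := by
  have hsum : 0 < Dp + Dm := by linarith
  have hm : 0 < Real.sqrt Dm := Real.sqrt_pos.mpr hDm
  have hp : 0 < Real.sqrt Dp := Real.sqrt_pos.mpr hDp
  have hsq : Real.sqrt Dm < Real.sqrt Dp := by
    exact Real.sqrt_lt_sqrt hDm.le hD
  have hmm : Real.sqrt Dm * Real.sqrt Dm = Dm := Real.mul_self_sqrt hDm.le
  have hpp : Real.sqrt Dp * Real.sqrt Dp = Dp := Real.mul_self_sqrt hDp.le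
  have h1 : (1 : ℝ) - lam = Dm / (Dp + Dm) := by
    rw [hlam]; field_simp; ring
  -- key: Dp * √Dm > Dm * √Dp
  have key : Dm * Real.sqrt Dp < Dp * Real.sqrt Dm := by
    nlinarith [mul_pos hm hp, mul_pos (mul_pos hm hp) (sub_pos.mpr hsq)]
  have hx : 0 < lam * Real.sqrt Dm := by
    rw [hlam]; positivity
  have hy : 0 < (1 - lam) * Real.sqrt Dp := by
    rw [h1]; positivity
  have hxy : (1 - lam) * Real.sqrt Dp < lam * Real.sqrt Dm := by
    rw [h1, hlam, div_mul_eq_mul_div, div_mul_eq_mul_div, div_lt_div_iff₀ hsum hsum]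
    nlinarith [key]
  rw [halpha, lt_div_iff₀ (by linarith), one_div]
  nlinarith [hxy]
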